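/- Both stagnation points (±√3/2, 0) of the field F are saddle points: the Jacobian of F at each has one strictly positive and one strictly negative real eigenvalue. -/

import Mathlib

open ContinuousLinearMap in
lemma key_deriv (x : ℝ) (hx : x ^ 2 = 3/4) :
    HasFDerivAt (fun p : ℝ × ℝ =>
      (-(p.2 - 1/2) / (p.1 ^ 2 + (p.2 - 1/2) ^ 2)
          + (p.2 + 1/2) / (p.1 ^ 2 + (p.2 + 1/2) ^ 2) - 1,
        p.1 / (p.1 ^ 2 + (p.2 - 1/2) ^ 2) - p.1 / (p.1 ^ 2 + (p.2 + 1/2) ^ 2)))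
      (((-2*x) • (ContinuousLinearMap.fst ℝ ℝ ℝ)).prod
        ((2*x) • (ContinuousLinearMap.snd ℝ ℝ ℝ))) (x, 0) := by
  have hfst : HasFDerivAt (fun p : ℝ × ℝ => p.1)
      (ContinuousLinearMap.fst ℝ ℝ ℝ) (x, 0) := hasFDerivAt_fst
  have hsnd : HasFDerivAt (fun p : ℝ × ℝ => p.2)
      (ContinuousLinearMap.snd ℝ ℝ ℝ) (x, 0) := hasFDerivAt_snd
  simp only [pow_two]
  have hA := (hfst.mul hfst).add
    ((hsnd.sub_const (1/2 : ℝ)).mul (hsnd.sub_const (1/2 : ℝ)))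
  have hB := (hfst.mul hfst).add
    ((hsnd.add_const (1/2 : ℝ)).mul (hsnd.add_const (1/2 : ℝ)))
  have hA0 : (x, (0:ℝ)).1 * (x, (0:ℝ)).1 + ((x, (0:ℝ)).2 - 1/2) * ((x, (0:ℝ)).2 - 1/2) ≠ 0 := by
    have : x * x = 3/4 := by nlinarith [hx]
    simp only []; rw [this]; norm_num
  have hB0 : (x, (0:ℝ)).1 * (x, (0:ℝ)).1 + ((x, (0:ℝ)).2 + 1/2) * ((x, (0:ℝ)).2 + 1/2) ≠ 0 := by
    have : x * x = 3/4 := by nlinarith [hx]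
    simp only []; rw [this]; norm_num
  simp only [div_eq_mul_inv]
  have hAi := (hasFDerivAt_inv hA0).comp ((x,0) : ℝ × ℝ) hA
  have hBi := (hasFDerivAt_inv hB0).comp ((x,0) : ℝ × ℝ) hB
  have h11 := ((hsnd.sub_const (1/2 : ℝ)).neg).mul hAi
  have h12 := (hsnd.add_const (1/2 : ℝ)).mul hBi
  have h1 := (h11.add h12).sub_const (1 : ℝ)
  have h21 := hfst.mul hAi
  have h22 := hfst.mul hBi
  have H := HasFDerivAt.prodMk h1 (h21.sub h22)
  refine H.congr_fderiv ?_
  have hxx : x * x = 3/4 := by nlinarith [hx]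
  ext v <;>
  · simp only [ContinuousLinearMap.prod_apply, ContinuousLinearMap.add_apply,
      ContinuousLinearMap.smul_apply, ContinuousLinearMap.sub_apply,
      ContinuousLinearMap.neg_apply, ContinuousLinearMap.comp_apply,
      ContinuousLinearMap.smulRight_apply, ContinuousLinearMap.one_apply,
      ContinuousLinearMap.coe_fst', ContinuousLinearMap.coe_snd',
      Function.comp_apply, smul_eq_mul]
    norm_num [hxx]
    try (ring_nf; rw [hxx]; ring)
    try nlinarith [hxx]

theorem stmt_7 :
    (let F : ℝ × ℝ → ℝ × ℝ := fun p =>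
      (-(p.2 - 1/2) / (p.1 ^ 2 + (p.2 - 1/2) ^ 2)
          + (p.2 + 1/2) / (p.1 ^ 2 + (p.2 + 1/2) ^ 2) - 1,
        p.1 / (p.1 ^ 2 + (p.2 - 1/2) ^ 2) - p.1 / (p.1 ^ 2 + (p.2 + 1/2) ^ 2));
    ∀ p : ℝ × ℝ, p = (Real.sqrt 3 / 2, 0) ∨ p = (-(Real.sqrt 3 / 2), 0) →
      ∃ (lam1 lam2 : ℝ) (v1 v2 : ℝ × ℝ), 0 < lam1 ∧ lam2 < 0 ∧ v1 ≠ 0 ∧ v2 ≠ 0 ∧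
        fderiv ℝ F p v1 = lam1 • v1 ∧ fderiv ℝ F p v2 = lam2 • v2) := by
  intro F p hp
  have hs : Real.sqrt 3 > 0 := Real.sqrt_pos.mpr (by norm_num)
  rcases hp with rfl | rfl
  · have hx : (Real.sqrt 3 / 2) ^ 2 = 3/4 := by
      rw [div_pow, Real.sq_sqrt (by norm_num : (3:ℝ) ≥ 0)]; norm_num
    have H := key_deriv _ hx
    have hf : fderiv ℝ F (Real.sqrt 3 / 2, 0) = _ := H.fderiv
    refine ⟨Real.sqrt 3, -Real.sqrt 3, (0,1), (1,0), hs, by linarith, ?_, ?_, ?_, ?_⟩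
    · simp [Prod.ext_iff]
    · simp [Prod.ext_iff]
    · rw [hf]; simp [Prod.ext_iff]; ring
    · rw [hf]; simp [Prod.ext_iff]; ring
  · have hx : (-(Real.sqrt 3 / 2)) ^ 2 = 3/4 := by
      rw [neg_pow, div_pow, Real.sq_sqrt (by norm_num : (3:ℝ) ≥ 0)]; norm_num
    have H := key_deriv _ hx
    have hf : fderiv ℝ F (-(Real.sqrt 3 / 2), 0) = _ := H.fderiv
    refine ⟨Real.sqrt 3, -Real.sqrt 3, (1,0), (0,1), hs, by linarith, ?_, ?_, ?_, ?_⟩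
    · simp [Prod.ext_iff]
    · simp [Prod.ext_iff]
    · rw [hf]; simp [Prod.ext_iff]; ring
    · rw [hf]; simp [Prod.ext_iff]; ring
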